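/- If (s,p) ∈ 𝔾, i.e., s = z₁+z₂ and p = z₁z₂ with |z₁| < 1 and |z₂| < 1, then |φ(α,s,p)| < 1 for every α in the closed unit disk, where φ(α,s,p) = (2αp − s)/(2 − αs). -/

import Mathlib

open Complex ComplexConjugate

/-- The real quadratic positivity lemma. -/
lemma aux_quad (A C d t : ℝ) (hA : 0 < A) (hd : 0 ≤ d) (h1 : 4 * d < A + C)
    (h2 : 2 * d < A) (ht0 : 0 ≤ t) (ht1 : t ≤ 1) :
    0 < A - 4 * d * t + C * t ^ 2 := by
  rcases le_or_gt C 0 with hC | hC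
  · -- concave case: g = (1-t)A + t(A+C-4d) - C t(1-t)
    nlinarith [mul_nonneg ht0 (sub_nonneg.2 ht1), mul_nonneg ht0 ht0,
      mul_nonneg (sub_nonneg.2 ht1) ht0]
  · rcases le_or_gt C (2 * d) with hC2 | hC2
    · -- decreasing on [0,1]: g t ≥ g 1 = A + C - 4d > 0
      nlinarith [mul_nonneg (sub_nonneg.2 ht1) ht0,
        mul_nonneg (sub_nonneg.2 ht1) (sub_nonneg.2 ht1)]
    · -- convex with interior min: C * g = (Ct - 2d)^2 + (AC - 4d^2) > 0
      nlinarith [sq_nonneg (C * t - 2 * d), mul_pos hA hC]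

theorem stmt2 (α s p z₁ z₂ : ℂ) (hα : ‖α‖ ≤ 1)
    (hz₁ : ‖z₁‖ < 1) (hz₂ : ‖z₂‖ < 1) (hs : s = z₁ + z₂) (hp : p = z₁ * z₂) :
    ‖(2 * α * p - s) / (2 - α * s)‖ < 1 := by
  have h01 : (0:ℝ) ≤ ‖z₁‖ := norm_nonneg _
  have h02 : (0:ℝ) ≤ ‖z₂‖ := norm_nonneg _
  have hq1 : normSq z₁ = ‖z₁‖ ^ 2 := by rw [normSq_eq_norm_sq]
  have hq2 : normSq z₂ = ‖z₂‖ ^ 2 := by rw [normSq_eq_norm_sq]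
  have hsn : ‖s‖ ≤ ‖z₁‖ + ‖z₂‖ := by rw [hs]; exact norm_add_le _ _
  have hpn : ‖p‖ = ‖z₁‖ * ‖z₂‖ := by rw [hp, norm_mul]
  have hfac : s - conj s * p
      = z₁ * (1 - (normSq z₂ : ℂ)) + z₂ * (1 - (normSq z₁ : ℂ)) := by
    rw [hs, hp, map_add, ← Complex.mul_conj, ← Complex.mul_conj]
    ring
  set d : ℝ := ‖s - conj s * p‖ with hdd
  have hd0 : 0 ≤ d := norm_nonneg _
  have hdle : d ≤ ‖z₁‖ * (1 - ‖z₂‖ ^ 2) + ‖z₂‖ * (1 - ‖z₁‖ ^ 2) := by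
    rw [hdd, hfac]
    refine le_trans (norm_add_le _ _) ?_
    rw [norm_mul, norm_mul]
    have e2 : ‖(1 - (normSq z₂ : ℂ))‖ = 1 - ‖z₂‖ ^ 2 := by
      rw [show (1 - (normSq z₂ : ℂ)) = ((1 - normSq z₂ : ℝ) : ℂ) by push_cast; ring,
        Complex.norm_real, Real.norm_eq_abs,
        _root_.abs_of_nonneg (by nlinarith : (0:ℝ) ≤ 1 - normSq z₂), hq2]
    have e1 : ‖(1 - (normSq z₁ : ℂ))‖ = 1 - ‖z₁‖ ^ 2 := by
      rw [show (1 - (normSq z₁ : ℂ)) = ((1 - normSq z₁ : ℝ) : ℂ) by push_cast; ring,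
        Complex.norm_real, Real.norm_eq_abs,
        _root_.abs_of_nonneg (by nlinarith : (0:ℝ) ≤ 1 - normSq z₁), hq1]
    rw [e1, e2]
  have hdlt : d < 1 - ‖p‖ ^ 2 := by
    rw [hpn]
    nlinarith [mul_pos (mul_pos (by nlinarith : (0:ℝ) < 1 - ‖z₁‖ * ‖z₂‖)
      (by nlinarith : (0:ℝ) < 1 - ‖z₁‖)) (by nlinarith : (0:ℝ) < 1 - ‖z₂‖)]
  have hsq : ‖s‖ ^ 2 ≤ (‖z₁‖ + ‖z₂‖) ^ 2 := pow_le_pow_left₀ (norm_nonneg s) hsn 2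
  have hs4 : ‖s‖ ^ 2 < 4 := by nlinarith
  have hs22 : ‖s‖ ^ 2 ≤ 2 + 2 * ‖p‖ ^ 2 := by
    rw [hpn]
    nlinarith [hsq, sq_nonneg (1 - ‖z₁‖ * ‖z₂‖),
      mul_nonneg (by nlinarith : (0:ℝ) ≤ 1 - ‖z₁‖ ^ 2)
        (by nlinarith : (0:ℝ) ≤ 1 - ‖z₂‖ ^ 2)]
  -- the fundamental identity
  have key : normSq (2 - α * s) - normSq (2 * α * p - s)
      = (4 - normSq s) + 4 * (α * (p * conj s - s)).re
        + normSq α * (normSq s - 4 * normSq p) := by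
    simp [Complex.normSq_apply, Complex.mul_re, Complex.mul_im, Complex.sub_re,
      Complex.sub_im, Complex.conj_re, Complex.conj_im]
    ring
  have hw : ‖p * conj s - s‖ = d := by
    rw [hdd, ← norm_neg (p * conj s - s)]
    congr 1; ring
  have hre : -(‖α‖ * d) ≤ (α * (p * conj s - s)).re := by
    have h1 := abs_le.1 (Complex.abs_re_le_norm (α * (p * conj s - s)))
    have h2 : ‖α * (p * conj s - s)‖ = ‖α‖ * d := by
      rw [← hw, norm_mul]
    linarith [h2 ▸ h1.1]
  have hqs : normSq s = ‖s‖ ^ 2 := by rw [normSq_eq_norm_sq]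
  have hqp : normSq p = ‖p‖ ^ 2 := by rw [normSq_eq_norm_sq]
  have hqa : normSq α = ‖α‖ ^ 2 := by rw [normSq_eq_norm_sq]
  have hquad : 0 < (4 - ‖s‖ ^ 2) - 4 * d * ‖α‖
      + (‖s‖ ^ 2 - 4 * ‖p‖ ^ 2) * ‖α‖ ^ 2 := by
    refine aux_quad _ _ _ _ (by linarith) hd0 ?_ ?_ (norm_nonneg _) hα
    · linarith only [hdlt, sq_nonneg ‖p‖]
    · linarith only [hdlt, hs22]
  have hpos : normSq (2 * α * p - s) < normSq (2 - α * s) := by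
    rw [hqs, hqp, hqa] at key
    linarith only [key, hre, hquad]
  have hnorm : ‖2 * α * p - s‖ < ‖2 - α * s‖ := by
    have e : ∀ z : ℂ, ‖z‖ ^ 2 = normSq z := fun z => by
      rw [Complex.sq_norm]
    have h1 : ‖2 * α * p - s‖ ^ 2 < ‖2 - α * s‖ ^ 2 := by
      rw [e, e]; exact hpos
    exact lt_of_pow_lt_pow_left₀ 2 (norm_nonneg _) h1
  have hden : 0 < ‖2 - α * s‖ := lt_of_le_of_lt (norm_nonneg _) hnorm
  rw [norm_div, div_lt_one hden]
  exact hnorm
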